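/- Let λ > 0, D > 0, let Ω ⊆ ℝⁿ be a measurable set, let d : Ω → ℝ be measurable with 0 ≤ d(x) ≤ D for all x ∈ Ω, and let f : Ω → ℝ be measurable. Then for every η > 0 there exists s₁ ≥ 0 such that for all s ≥ s₁, ∫_{(a,b)} ∫_Ω |f(x)|² exp(2s(e^{λd(x)} − e^{2λD}) h(t)) dx dt ≤ η · ∫_Ω |f(x)|² exp(2s(e^{λd(x)} − e^{2λD}) h(t₀)) dx (Lebesgue integrals of nonnegative functions). This is the paper's claim that ∫∫ |f|² e^{2sα} dx dt = o(1) · ∫ |f|² e^{2sα(·,t₀)} dx as s → +∞. -/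

import Mathlib

open MeasureTheory

/-- Let `a < b`, `t₀ = (a+b)/2`, `h t = ((t-a)(b-t))^(-1/2)`. Let `λ > 0`, `D > 0`,
`Ω ⊆ ℝⁿ` measurable, `d` measurable with `0 ≤ d ≤ D` on `Ω`, `f` measurable. Then for
every `η > 0` there exists `s₁ ≥ 0` such that for all `s ≥ s₁`,
`∫_{(a,b)} ∫_Ω |f|² e^{2sα(x,t)} dx dt ≤ η · ∫_Ω |f|² e^{2sα(x,t₀)} dx`,
where `α(x,t) = (e^{λd(x)} - e^{2λD}) h(t)`. -/
theorem weight_space_time_integral_small (n : ℕ) (a b τ t₀ : ℝ) (hab : a < b)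
    (hτ : τ = (b - a) / 2) (ht₀ : t₀ = (a + b) / 2)
    (h : ℝ → ℝ) (hh : ∀ t, h t = (Real.sqrt ((t - a) * (b - t)))⁻¹)
    (lam D : ℝ) (hlam : 0 < lam) (hD : 0 < D)
    (Ω : Set (Fin n → ℝ)) (hΩ : MeasurableSet Ω)
    (d : (Fin n → ℝ) → ℝ) (hd : Measurable d) (hdD : ∀ x ∈ Ω, d x ∈ Set.Icc (0 : ℝ) D)
    (f : (Fin n → ℝ) → ℝ) (hf : Measurable f) :
    ∀ η > (0 : ℝ), ∃ s₁ ≥ (0 : ℝ), ∀ s ≥ s₁,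
      (∫⁻ t in Set.Ioo a b, ∫⁻ x in Ω,
          ENNReal.ofReal (|f x| ^ 2 *
            Real.exp (2 * s * (Real.exp (lam * d x) - Real.exp (2 * lam * D)) * h t))) ≤
        ENNReal.ofReal η *
          ∫⁻ x in Ω,
            ENNReal.ofReal (|f x| ^ 2 *
              Real.exp (2 * s * (Real.exp (lam * d x) - Real.exp (2 * lam * D)) * h t₀)) := by
  intro η hη
  have hτ0 : 0 < τ := by rw [hτ]; linarith
  set m := Real.exp (2 * lam * D) - Real.exp (lam * D) with hm_def
  have hm : 0 < m := by
    have : Real.exp (lam * D) < Real.exp (2 * lam * D) :=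
      Real.exp_lt_exp.mpr (by nlinarith)
    rw [hm_def]; linarith
  -- h properties
  have hht0 : h t₀ = τ⁻¹ := by
    rw [hh]
    have hP : (t₀ - a) * (b - t₀) = τ ^ 2 := by rw [ht₀, hτ]; ring
    rw [hP, Real.sqrt_sq hτ0.le]
  have hsqrt : ∀ t ∈ Set.Ioo a b, 0 < Real.sqrt ((t - a) * (b - t)) ∧
      Real.sqrt ((t - a) * (b - t)) ≤ τ := by
    intro t ht
    have hP0 : 0 < (t - a) * (b - t) := mul_pos (by linarith [ht.1]) (by linarith [ht.2])
    have hPτ : (t - a) * (b - t) ≤ τ ^ 2 := by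
      rw [hτ]; nlinarith [sq_nonneg (t - (a + b) / 2)]
    refine ⟨Real.sqrt_pos.mpr hP0, ?_⟩
    calc Real.sqrt ((t - a) * (b - t)) ≤ Real.sqrt (τ ^ 2) := Real.sqrt_le_sqrt hPτ
      _ = τ := Real.sqrt_sq hτ0.le
  have hδ0 : ∀ t ∈ Set.Ioo a b, h t₀ ≤ h t := by
    intro t ht
    rw [hht0, hh]
    exact inv_anti₀ (hsqrt t ht).1 (hsqrt t ht).2
  have hδpos : ∀ t ∈ Set.Ioo a b, t ≠ t₀ → h t₀ < h t := by
    intro t ht hne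
    rw [hht0, hh]
    have hP0 : 0 < (t - a) * (b - t) := mul_pos (by linarith [ht.1]) (by linarith [ht.2])
    have hPτ : (t - a) * (b - t) < τ ^ 2 := by
      have : (t - (a + b) / 2) ^ 2 > 0 := by
        have : t - (a + b) / 2 ≠ 0 := by rw [ht₀] at hne; intro hc; apply hne; linarith
        positivity
      rw [hτ]; nlinarith
    have hlt : Real.sqrt ((t - a) * (b - t)) < τ := by
      calc Real.sqrt ((t - a) * (b - t)) < Real.sqrt (τ ^ 2) :=
            Real.sqrt_lt_sqrt hP0.le hPτ
        _ = τ := Real.sqrt_sq hτ0.le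
    exact inv_strictAnti₀ (Real.sqrt_pos.mpr hP0) hlt
  -- the weight
  set w : ℝ → ℝ → ℝ := fun s t => Real.exp (-(2 * s * m) * (h t - h t₀)) with hw_def
  have hmeas_h : Measurable h := by
    have : h = fun t => (Real.sqrt ((t - a) * (b - t)))⁻¹ := funext hh
    rw [this]; fun_prop
  have hmeas_w : ∀ s, Measurable fun t => ENNReal.ofReal (w s t) := by
    intro s
    apply ENNReal.measurable_ofReal.comp
    apply Real.measurable_exp.comp
    fun_prop
  set G : ℝ → ENNReal := fun s => ∫⁻ t in Set.Ioo a b, ENNReal.ofReal (w s t) with hG_def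
  -- dominated convergence
  have htend : Filter.Tendsto (fun n : ℕ => G n) Filter.atTop (nhds 0) := by
    have h0 : (0 : ENNReal) = ∫⁻ _ in Set.Ioo a b, (0 : ENNReal) := by simp
    rw [h0]
    apply tendsto_lintegral_of_dominated_convergence (fun _ => (1 : ENNReal))
      (fun n => hmeas_w n)
    · intro n
      filter_upwards [ae_restrict_mem measurableSet_Ioo] with t ht
      have : w n t ≤ 1 := by
        rw [hw_def]
        apply Real.exp_le_one_iff.mpr
        have h1 := hδ0 t ht
        have hn0 : (0:ℝ) ≤ (n:ℝ) := Nat.cast_nonneg n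
        nlinarith [mul_nonneg (mul_nonneg hn0 hm.le) (sub_nonneg.mpr h1)]
      calc ENNReal.ofReal (w (n : ℝ) t) ≤ ENNReal.ofReal 1 := ENNReal.ofReal_le_ofReal this
        _ = 1 := by simp
    · simp [Real.volume_Ioo]
    · have hne : ∀ᵐ t ∂(volume.restrict (Set.Ioo a b)), t ≠ t₀ := by
        apply ae_restrict_of_ae
        rw [Filter.eventually_iff, mem_ae_iff]
        have : {t : ℝ | t ≠ t₀}ᶜ = {t₀} := by ext t; simp
        rw [this]; exact Real.volume_singleton
      filter_upwards [ae_restrict_mem measurableSet_Ioo, hne] with t ht htne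
      have hδ : 0 < h t - h t₀ := by linarith [hδpos t ht htne]
      have hreal : Filter.Tendsto (fun n : ℕ => w n t) Filter.atTop (nhds 0) := by
        have hrw : (fun n : ℕ => w n t) =
            fun n : ℕ => Real.exp (-(2 * m * (h t - h t₀))) ^ n := by
          ext n
          rw [hw_def, ← Real.exp_nat_mul]
          ring_nf
        rw [hrw]
        apply tendsto_pow_atTop_nhds_zero_of_lt_one (Real.exp_nonneg _)
        rw [Real.exp_lt_one_iff]
        nlinarith
      have := (ENNReal.continuous_ofReal.tendsto 0).comp hreal
      simpa [Function.comp_def] using this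
  -- choose N
  have hev : ∀ᶠ n : ℕ in Filter.atTop, G n < ENNReal.ofReal η := by
    apply htend.eventually_lt_const (ENNReal.ofReal_pos.mpr hη)
  obtain ⟨N, hN⟩ := hev.exists
  refine ⟨(N : ℝ), Nat.cast_nonneg N, ?_⟩
  intro s hs
  have hs0 : (0 : ℝ) ≤ s := le_trans (Nat.cast_nonneg N) hs
  set I : ENNReal := ∫⁻ x in Ω, ENNReal.ofReal (|f x| ^ 2 *
      Real.exp (2 * s * (Real.exp (lam * d x) - Real.exp (2 * lam * D)) * h t₀)) with hI_def
  -- pointwise bound for the inner integral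
  have key : ∀ t ∈ Set.Ioo a b,
      (∫⁻ x in Ω, ENNReal.ofReal (|f x| ^ 2 *
        Real.exp (2 * s * (Real.exp (lam * d x) - Real.exp (2 * lam * D)) * h t))) ≤
      ENNReal.ofReal (w s t) * I := by
    intro t ht
    have step : (∫⁻ x in Ω, ENNReal.ofReal (|f x| ^ 2 *
        Real.exp (2 * s * (Real.exp (lam * d x) - Real.exp (2 * lam * D)) * h t))) ≤
        ∫⁻ x in Ω, ENNReal.ofReal (w s t) * ENNReal.ofReal (|f x| ^ 2 *
          Real.exp (2 * s * (Real.exp (lam * d x) - Real.exp (2 * lam * D)) * h t₀)) := by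
      apply setLIntegral_mono' hΩ
      intro x hx
      rw [← ENNReal.ofReal_mul (Real.exp_nonneg _)]
      apply ENNReal.ofReal_le_ofReal
      have hrw : w s t * (|f x| ^ 2 *
          Real.exp (2 * s * (Real.exp (lam * d x) - Real.exp (2 * lam * D)) * h t₀)) =
          |f x| ^ 2 * Real.exp (-(2 * s * m) * (h t - h t₀) +
            2 * s * (Real.exp (lam * d x) - Real.exp (2 * lam * D)) * h t₀) := by
        rw [hw_def, Real.exp_add]; ring
      rw [hrw]
      apply mul_le_mul_of_nonneg_left _ (sq_nonneg _)
      apply Real.exp_le_exp.mpr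
      have hdx : d x ≤ D := (hdD x hx).2
      have hcm : Real.exp (lam * d x) - Real.exp (2 * lam * D) + m ≤ 0 := by
        have : Real.exp (lam * d x) ≤ Real.exp (lam * D) :=
          Real.exp_le_exp.mpr (by nlinarith)
        rw [hm_def]; linarith
      have hδ : 0 ≤ h t - h t₀ := by linarith [hδ0 t ht]
      nlinarith [mul_nonneg (mul_nonneg hs0 hδ)
        (neg_nonneg.mpr hcm), mul_nonneg hs0 hδ]
    calc _ ≤ _ := step
      _ = ENNReal.ofReal (w s t) * I := by
        rw [hI_def, lintegral_const_mul' _ _ ENNReal.ofReal_ne_top]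
  -- weight integral monotone in s
  have hws : (∫⁻ t in Set.Ioo a b, ENNReal.ofReal (w s t)) ≤ G N := by
    apply setLIntegral_mono' measurableSet_Ioo
    intro t ht
    apply ENNReal.ofReal_le_ofReal
    apply Real.exp_le_exp.mpr
    have hδ : 0 ≤ h t - h t₀ := by linarith [hδ0 t ht]
    nlinarith [mul_nonneg (mul_nonneg (sub_nonneg.mpr hs) hm.le) hδ]
  calc (∫⁻ t in Set.Ioo a b, ∫⁻ x in Ω, ENNReal.ofReal (|f x| ^ 2 *
          Real.exp (2 * s * (Real.exp (lam * d x) - Real.exp (2 * lam * D)) * h t)))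
      ≤ ∫⁻ t in Set.Ioo a b, ENNReal.ofReal (w s t) * I :=
        setLIntegral_mono' measurableSet_Ioo key
    _ = (∫⁻ t in Set.Ioo a b, ENNReal.ofReal (w s t)) * I := by
        simpa [mul_comm] using lintegral_mul_const I (hmeas_w s) (μ := volume.restrict (Set.Ioo a b))
    _ ≤ G N * I := mul_le_mul_left hws I
    _ ≤ ENNReal.ofReal η * I := mul_le_mul_left hN.le I
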